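/- Let X be a Hausdorff topological space, U, V open subsets, and T : U → V a local homeomorphism. Then the Renault-Deaconu groupoid G(X,T) = {(x, n−m, y) : n,m ∈ ℕ, x ∈ Dom(T^n), y ∈ Dom(T^m), T^n(x) = T^m(y)}, equipped with the topology generated by the sets W(n,m,U',V') = {(x, n−m, y) : x ∈ U', y ∈ V', T^n x = T^m y} for U' ⊆ Dom(T^n), V' ⊆ Dom(T^m) open with T^n|_{U'}, T^m|_{V'} injective, is a Hausdorff topological space. -/
import Mathlib


/-- The maximal domain of the `p`-th iterate of the partially defined map `T` with
domain `D`: points whose first `p` iterates stay in `D`. -/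
def IterDom {X : Type*} (T : X → X) (D : Set X) (p : ℕ) : Set X :=
  {x | ∀ k, k < p → T^[k] x ∈ D}

/-- The underlying set of the Renault-Deaconu groupoid `G(X,T)`. -/
def RDSet {X : Type*} (T : X → X) (D : Set X) : Set (X × ℤ × X) :=
  {z | ∃ n m : ℕ, z.2.1 = (n : ℤ) - (m : ℤ) ∧ z.1 ∈ IterDom T D n ∧
    z.2.2 ∈ IterDom T D m ∧ T^[n] z.1 = T^[m] z.2.2}

/-- The basic open sets `W(n, m, U, V)` of the Renault-Deaconu groupoid. -/
def RDBasis {X : Type*} [TopologicalSpace X] (T : X → X) (D : Set X) :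
    Set (Set {z : X × ℤ × X // z ∈ RDSet T D}) :=
  {S | ∃ (n m : ℕ) (U V : Set X), IsOpen U ∧ IsOpen V ∧
    U ⊆ IterDom T D n ∧ V ⊆ IterDom T D m ∧
    Set.InjOn (T^[n]) U ∧ Set.InjOn (T^[m]) V ∧
    S = {z | z.1.2.1 = (n : ℤ) - (m : ℤ) ∧ z.1.1 ∈ U ∧ z.1.2.2 ∈ V ∧
          T^[n] z.1.1 = T^[m] z.1.2.2}}

/-- Around any point of `IterDom T D n` there is an open neighborhood contained in
`IterDom T D n` on which `T^[n]` is injective. -/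
lemma iterDom_inj_nbhd {X : Type*} [TopologicalSpace X] {T : X → X} {D : Set X}
    (hD : IsOpen D) (hT : IsLocalHomeomorphOn T D) :
    ∀ n (x : X), x ∈ IterDom T D n →
      ∃ U, IsOpen U ∧ x ∈ U ∧ U ⊆ IterDom T D n ∧ Set.InjOn (T^[n]) U := by
  intro n
  induction n with
  | zero =>
    intro x _
    exact ⟨Set.univ, isOpen_univ, trivial, fun y _ k hk => absurd hk (Nat.not_lt_zero k),
      by simp [Set.InjOn]⟩
  | succ n ih =>
    intro x hx
    have hxD : x ∈ D := by simpa using hx 0 n.succ_pos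
    have hTx : T x ∈ IterDom T D n := by
      intro k hk
      have := hx (k + 1) (by omega)
      simpa [Function.iterate_succ_apply] using this
    obtain ⟨W, hWo, hTxW, hWsub, hWinj⟩ := ih (T x) hTx
    obtain ⟨e, hxe, hfe⟩ := hT x hxD
    refine ⟨(e.source ∩ ↑e ⁻¹' W) ∩ D, (e.isOpen_inter_preimage hWo).inter hD,
      ⟨⟨hxe, ?_⟩, hxD⟩, ?_, ?_⟩
    · show e x ∈ W
      rw [← hfe]; exact hTxW
    · rintro a ⟨⟨hae, haeW⟩, haD⟩ k hk
      match k with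
      | 0 => simpa using haD
      | k + 1 =>
        have hTaW : T a ∈ W := by rw [hfe]; exact haeW
        have := hWsub hTaW k (by omega)
        simpa [Function.iterate_succ_apply] using this
    · rintro a ⟨⟨hae, haeW⟩, _⟩ b ⟨⟨hbe, hbeW⟩, _⟩ hab
      have hTaW : T a ∈ W := by rw [hfe]; exact haeW
      have hTbW : T b ∈ W := by rw [hfe]; exact hbeW
      have hab' : T^[n] (T a) = T^[n] (T b) := by
        simpa [Function.iterate_succ_apply] using hab
      have hTab : T a = T b := hWinj hTaW hTbW hab'
      have : e a = e b := by rw [← hfe]; exact hTab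
      exact e.injOn hae hbe this

/-- Any point of the groupoid, with witnesses `n, m`, lies in a basic open set contained
in prescribed open neighborhoods of its two `X`-coordinates. -/
lemma rd_basic_mem {X : Type*} [TopologicalSpace X] {T : X → X} {D : Set X}
    (hD : IsOpen D) (hT : IsLocalHomeomorphOn T D)
    (z : {z : X × ℤ × X // z ∈ RDSet T D}) {n m : ℕ}
    (h1 : z.1.2.1 = (n : ℤ) - m) (h2 : z.1.1 ∈ IterDom T D n)
    (h3 : z.1.2.2 ∈ IterDom T D m) (h4 : T^[n] z.1.1 = T^[m] z.1.2.2)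
    {A B : Set X} (hA : IsOpen A) (hB : IsOpen B) (hxA : z.1.1 ∈ A) (hyB : z.1.2.2 ∈ B) :
    ∃ S ∈ RDBasis T D, z ∈ S ∧
      ∀ w ∈ S, w.1.2.1 = (n : ℤ) - m ∧ w.1.1 ∈ A ∧ w.1.2.2 ∈ B := by
  obtain ⟨U, hUo, hxU, hUsub, hUinj⟩ := iterDom_inj_nbhd hD hT n z.1.1 h2
  obtain ⟨V, hVo, hyV, hVsub, hVinj⟩ := iterDom_inj_nbhd hD hT m z.1.2.2 h3
  refine ⟨_, ⟨n, m, U ∩ A, V ∩ B, hUo.inter hA, hVo.inter hB,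
    fun a ha => hUsub ha.1, fun a ha => hVsub ha.1,
    hUinj.mono Set.inter_subset_left, hVinj.mono Set.inter_subset_left, rfl⟩,
    ⟨h1, ⟨hxU, hxA⟩, ⟨hyV, hyB⟩, h4⟩,
    fun w hw => ⟨hw.1, hw.2.1.2, hw.2.2.1.2⟩⟩

/-- If `X` is Hausdorff and `T` is a local homeomorphism defined on an open subset
`D ⊆ X`, then the Renault-Deaconu groupoid `G(X,T)`, with the topology generated by the
sets `W(n,m,U,V)`, is a Hausdorff topological space. -/
theorem renaultDeaconu_groupoid_t2Space
    {X : Type*} [TopologicalSpace X] [T2Space X] (T : X → X) (D : Set X)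
    (hD : IsOpen D) (hT : IsLocalHomeomorphOn T D) :
    @T2Space {z : X × ℤ × X // z ∈ RDSet T D}
      (TopologicalSpace.generateFrom (RDBasis T D)) := by
  letI : TopologicalSpace {z : X × ℤ × X // z ∈ RDSet T D} :=
    TopologicalSpace.generateFrom (RDBasis T D)
  constructor
  intro z1 z2 hne
  obtain ⟨n1, m1, e1, hx1, hy1, ht1⟩ := z1.2
  obtain ⟨n2, m2, e2, hx2, hy2, ht2⟩ := z2.2
  by_cases hk : z1.1.2.1 = z2.1.2.1
  · by_cases hx : z1.1.1 = z2.1.1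
    · by_cases hy : z1.1.2.2 = z2.1.2.2
      · exact absurd (Subtype.ext (Prod.ext hx (Prod.ext hk hy))) hne
      · obtain ⟨B1, B2, hB1, hB2, hy1B, hy2B, hBd⟩ := t2_separation hy
        obtain ⟨S1, hS1b, hz1, hsub1⟩ :=
          rd_basic_mem hD hT z1 e1 hx1 hy1 ht1 isOpen_univ hB1 trivial hy1B
        obtain ⟨S2, hS2b, hz2, hsub2⟩ :=
          rd_basic_mem hD hT z2 e2 hx2 hy2 ht2 isOpen_univ hB2 trivial hy2B
        refine ⟨S1, S2, TopologicalSpace.isOpen_generateFrom_of_mem hS1b,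
          TopologicalSpace.isOpen_generateFrom_of_mem hS2b, hz1, hz2,
          Set.disjoint_left.mpr fun w hw1 hw2 => ?_⟩
        exact Set.disjoint_left.mp hBd (hsub1 w hw1).2.2 (hsub2 w hw2).2.2
    · obtain ⟨A1, A2, hA1, hA2, hx1A, hx2A, hAd⟩ := t2_separation hx
      obtain ⟨S1, hS1b, hz1, hsub1⟩ :=
        rd_basic_mem hD hT z1 e1 hx1 hy1 ht1 hA1 isOpen_univ hx1A trivial
      obtain ⟨S2, hS2b, hz2, hsub2⟩ :=
        rd_basic_mem hD hT z2 e2 hx2 hy2 ht2 hA2 isOpen_univ hx2A trivial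
      refine ⟨S1, S2, TopologicalSpace.isOpen_generateFrom_of_mem hS1b,
        TopologicalSpace.isOpen_generateFrom_of_mem hS2b, hz1, hz2,
        Set.disjoint_left.mpr fun w hw1 hw2 => ?_⟩
      exact Set.disjoint_left.mp hAd (hsub1 w hw1).2.1 (hsub2 w hw2).2.1
  · obtain ⟨S1, hS1b, hz1, hsub1⟩ :=
      rd_basic_mem hD hT z1 e1 hx1 hy1 ht1 isOpen_univ isOpen_univ trivial trivial
    obtain ⟨S2, hS2b, hz2, hsub2⟩ :=
      rd_basic_mem hD hT z2 e2 hx2 hy2 ht2 isOpen_univ isOpen_univ trivial trivial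
    refine ⟨S1, S2, TopologicalSpace.isOpen_generateFrom_of_mem hS1b,
      TopologicalSpace.isOpen_generateFrom_of_mem hS2b, hz1, hz2,
      Set.disjoint_left.mpr fun w hw1 hw2 => ?_⟩
    exact hk (by rw [e1, e2, ← (hsub1 w hw1).1, (hsub2 w hw2).1])
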